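/- Let P be a perfect-tree forcing notion and D ⊆ P a pre-dense subset of P. If ψ is a finite splitting system over P of height n ≥ 1, then there exists a finite splitting system φ over P which reduces ψ and such that for every s ∈ 2^{n-1} there is a tree S ∈ D with φ(s) ⊆ S. -/
import Mathlib


/-- A tree: a set of finite binary strings closed under initial segments. -/
def IsTree (T : Set (List Bool)) : Prop :=
  ∀ s t : List Bool, s <+: t → t ∈ T → s ∈ T

/-- A perfect tree: a nonempty tree in which every node has a splitting extension. -/
def IsPerfectTree (T : Set (List Bool)) : Prop :=
  T.Nonempty ∧ IsTree T ∧
    ∀ s ∈ T, ∃ t ∈ T, s <+: t ∧ t ++ [false] ∈ T ∧ t ++ [true] ∈ T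

/-- T↾u = {t ∈ T : u ⊑ t or t ⊑ u}. -/
def restr (T : Set (List Bool)) (u : List Bool) : Set (List Bool) :=
  {t | t ∈ T ∧ (u <+: t ∨ t <+: u)}

/-- [T]: the set of paths through T, as a subset of Cantor space 2^ω = ℕ → Bool. -/
def paths (T : Set (List Bool)) : Set (ℕ → Bool) :=
  {a | ∀ n : ℕ, (List.ofFn fun i : Fin n => a i) ∈ T}

/-- s is the stem (root) of T: the ⊑-largest string s ∈ T with T = T↾s. -/
def IsStem (T : Set (List Bool)) (s : List Bool) : Prop :=
  s ∈ T ∧ T = restr T s ∧ ∀ t ∈ T, T = restr T t → t <+: s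

/-- The stem of a tree (well-defined and equal to the root for perfect trees). -/
noncomputable def stem (T : Set (List Bool)) : List Bool :=
  haveI := Classical.dec (∃ s, IsStem T s)
  if h : ∃ s, IsStem T s then h.choose else []

/-- A perfect-tree forcing notion: a set of perfect trees closed under T ↦ T↾u, u ∈ T. -/
def IsPTF (P : Set (Set (List Bool))) : Prop :=
  (∀ T ∈ P, IsPerfectTree T) ∧ ∀ T ∈ P, ∀ u ∈ T, restr T u ∈ P

/-- A finite splitting system over P of height n, given as ⟨φ s⟩ for strings of length < n. -/
def FinSplitSys (P : Set (Set (List Bool))) (n : ℕ)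
    (φ : List Bool → Set (List Bool)) : Prop :=
  (∀ s : List Bool, s.length < n → φ s ∈ P) ∧
  ∀ (s : List Bool) (i : Bool), s.length + 1 < n →
    φ (s ++ [i]) ⊆ φ s ∧ stem (φ s) ++ [i] <+: stem (φ (s ++ [i]))

/-- A full splitting system over P, indexed by all of 2^{<ω}. -/
def FullSplitSys (P : Set (Set (List Bool)))
    (φ : List Bool → Set (List Bool)) : Prop :=
  (∀ s : List Bool, φ s ∈ P) ∧
  ∀ (s : List Bool) (i : Bool),
    φ (s ++ [i]) ⊆ φ s ∧ stem (φ s) ++ [i] <+: stem (φ (s ++ [i]))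

/-- T̄(s) = ⋂_{n ≥ |s|} ⋃ {φ t : t ∈ 2ⁿ, s ⊑ t}. -/
def Tbar (φ : List Bool → Set (List Bool)) (s : List Bool) : Set (List Bool) :=
  ⋂ n ∈ {n : ℕ | s.length ≤ n},
    ⋃ t ∈ {t : List Bool | t.length = n ∧ s <+: t}, φ t

section Aux

lemma restr_eq_iff {T : Set (List Bool)} {u : List Bool} :
    T = restr T u ↔ ∀ t ∈ T, u <+: t ∨ t <+: u := by
  constructor
  · intro h t ht
    rw [h] at ht
    exact ht.2
  · intro h
    ext t
    exact ⟨fun ht => ⟨ht, h t ht⟩, fun ht => ht.1⟩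

/-- Any string comparable with everything in `T` is a prefix of any splitting node of `T`. -/
lemma prefix_of_split {T : Set (List Bool)} {u t0 : List Bool}
    (h0 : t0 ++ [false] ∈ T) (h1 : t0 ++ [true] ∈ T)
    (h : ∀ t ∈ T, u <+: t ∨ t <+: u) : u <+: t0 := by
  have hne : t0 ++ [false] ≠ t0 ++ [true] := by simp
  rcases h _ h0 with hf | hf <;> rcases h _ h1 with ht | ht
  · -- u <+: t0++[false], u <+: t0++[true]
    by_cases hlen : u.length ≤ t0.length
    · exact List.prefix_of_prefix_length_le hf (List.prefix_append t0 [false]) hlen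
    · exfalso
      have h2 : u.length = t0.length + 1 := by
        have := hf.length_le; simp at this; omega
      have e1 : u = t0 ++ [false] := hf.eq_of_length (by simpa using h2)
      have e2 : u = t0 ++ [true] := ht.eq_of_length (by simpa using h2)
      exact hne (e1 ▸ e2)
  · exfalso
    exact hne (((ht.trans hf).eq_of_length (by simp)).symm)
  · exfalso
    exact hne ((hf.trans ht).eq_of_length (by simp))
  · exfalso
    have : t0 ++ [false] = t0 ++ [true] :=
      (List.prefix_of_prefix_length_le hf ht (by simp)).eq_of_length (by simp)
    exact hne this

lemma exists_stem {T : Set (List Bool)} (hT : IsPerfectTree T) : ∃ s, IsStem T s := by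
  classical
  obtain ⟨hne, htree, hsplit⟩ := hT
  obtain ⟨x, hx⟩ := hne
  obtain ⟨t0, ht0T, _, h0, h1⟩ := hsplit x hx
  set Q : ℕ → Prop := fun k => t0.take k ∈ T ∧ T = restr T (t0.take k) with hQ
  have hQ0 : Q 0 := by
    constructor
    · simpa using htree [] x (List.nil_prefix) hx
    · rw [restr_eq_iff]
      intro t _
      left; simp
  have hcand : ∀ u, u ∈ T → T = restr T u → u <+: t0 :=
    fun u _ hu => prefix_of_split h0 h1 (restr_eq_iff.mp hu)
  set m := Nat.findGreatest Q t0.length with hm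
  have hQm : Q m := Nat.findGreatest_spec (Nat.zero_le _) hQ0
  refine ⟨t0.take m, hQm.1, hQm.2, ?_⟩
  intro u huT hu
  have hpre : u <+: t0 := hcand u huT hu
  have hulen : u.length ≤ t0.length := hpre.length_le
  have hQu : Q u.length := by
    have h' : List.take u.length t0 = u := (List.prefix_iff_eq_take.mp hpre).symm
    simp only [hQ]
    rw [h']
    exact ⟨huT, hu⟩
  have hle : u.length ≤ m := Nat.le_findGreatest hulen hQu
  calc u = t0.take u.length := List.prefix_iff_eq_take.mp hpre
    _ <+: t0.take m := List.prefix_of_prefix_length_le (List.take_prefix _ _)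
        (List.take_prefix _ _) (by simp; omega)

lemma isStem_stem {T : Set (List Bool)} (hT : IsPerfectTree T) : IsStem T (stem T) := by
  have h : ∃ s, IsStem T s := exists_stem hT
  rw [stem]
  simp only [dif_pos h]
  exact h.choose_spec

lemma exists_long_elem {T : Set (List Bool)} (hT : IsPerfectTree T) (k : ℕ) :
    ∃ x ∈ T, k ≤ x.length := by
  induction k with
  | zero => obtain ⟨x, hx⟩ := hT.1; exact ⟨x, hx, Nat.zero_le _⟩
  | succ k ih =>
    obtain ⟨x, hx, hk⟩ := ih
    obtain ⟨t, htT, hxt, h0, _⟩ := hT.2.2 x hx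
    exact ⟨t ++ [false], h0, by
      have := hxt.length_le
      simp; omega⟩

/-- If S ⊆ T are perfect trees then stem T is a prefix of stem S. -/
lemma stem_prefix_of_subset {S T : Set (List Bool)} (hS : IsPerfectTree S)
    (hT : IsPerfectTree T) (hsub : S ⊆ T) : stem T <+: stem S := by
  obtain ⟨hTmem, hTeq, _⟩ := isStem_stem hT
  obtain ⟨hSmem, hSeq, hSmax⟩ := isStem_stem hS
  have hcomp : ∀ x ∈ S, stem T <+: x ∨ x <+: stem T :=
    fun x hx => (restr_eq_iff.mp hTeq) x (hsub hx)
  -- stem T ∈ S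
  obtain ⟨x, hxS, hxlen⟩ := exists_long_elem hS (stem T).length
  have hstemTS : stem T ∈ S := by
    rcases hcomp x hxS with h | h
    · exact hS.2.1 _ _ h hxS
    · have : x = stem T := h.eq_of_length (le_antisymm h.length_le hxlen)
      exact this ▸ hxS
  have : S = restr S (stem T) := restr_eq_iff.mpr hcomp
  exact hSmax _ hstemTS this

end Aux

/-- If D ⊆ P is pre-dense in P and ψ is a finite splitting system over P
of height n ≥ 1, then there is a finite splitting system φ over P which reduces ψ such
that each top-layer tree φ(s), s ∈ 2^{n-1}, is contained in some member of D. -/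



theorem stmt_13 (P : Set (Set (List Bool))) (hP : IsPTF P)
    (D : Set (Set (List Bool))) (hD : D ⊆ P)
    (hpre : ∀ T ∈ P, ∃ S ∈ D, ∃ T' ∈ P, T' ⊆ T ∧ T' ⊆ S)
    (n : ℕ) (hn : 1 ≤ n)
    (ψ : List Bool → Set (List Bool)) (hψ : FinSplitSys P n ψ) :
    ∃ φ : List Bool → Set (List Bool),
      FinSplitSys P n φ ∧
      (∀ s : List Bool, s.length + 1 = n → φ s ⊆ ψ s) ∧
      (∀ s : List Bool, s.length + 1 < n → φ s = ψ s) ∧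
      (∀ s : List Bool, s.length + 1 = n → ∃ S ∈ D, φ s ⊆ S) := by
  classical
  have hex : ∀ s : List Bool, ∃ T' : Set (List Bool),
      s.length + 1 = n → T' ∈ P ∧ T' ⊆ ψ s ∧ ∃ S ∈ D, T' ⊆ S := by
    intro s
    by_cases hs : s.length + 1 = n
    · obtain ⟨S, hSD, T', hT'P, hT'ψ, hT'S⟩ := hpre (ψ s) (hψ.1 s (by omega))
      exact ⟨T', fun _ => ⟨hT'P, hT'ψ, S, hSD, hT'S⟩⟩
    · exact ⟨∅, fun h => absurd h hs⟩
  choose f hf using hex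
  refine ⟨fun s => if s.length + 1 = n then f s else ψ s, ⟨?_, ?_⟩, ?_, ?_, ?_⟩
  · intro s hs
    by_cases h : s.length + 1 = n
    · simpa [h] using (hf s h).1
    · simpa [h] using hψ.1 s hs
  · intro s i hs
    beta_reduce
    by_cases h : (s ++ [i]).length + 1 = n
    · have hfi := hf (s ++ [i]) h
      have hne : ¬ (s.length + 1 = n) := by omega
      rw [if_pos h, if_neg hne]
      have hsub : f (s ++ [i]) ⊆ ψ s := hfi.2.1.trans (hψ.2 s i hs).1
      have hperf1 : IsPerfectTree (f (s ++ [i])) := hP.1 _ hfi.1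
      have hperf2 : IsPerfectTree (ψ (s ++ [i])) := hP.1 _ (hψ.1 _ (by omega))
      exact ⟨hsub, (hψ.2 s i hs).2.trans (stem_prefix_of_subset hperf1 hperf2 hfi.2.1)⟩
    · have hne : ¬ (s.length + 1 = n) := by omega
      rw [if_neg h, if_neg hne]
      exact hψ.2 s i hs
  · intro s hs
    simp only [hs, if_pos]
    exact (hf s hs).2.1
  · intro s hs
    simp [Nat.ne_of_lt hs]
  · intro s hs
    simp only [hs, if_pos]
    exact (hf s hs).2.2
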